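/- Let M be a monoid and P an M-partial order. Then the formula a(p₀ ∨ ⋯ ∨ pₙ) = a(p₀) ∨ ⋯ ∨ a(pₙ) gives a well-defined action of M on the semigroup ⟨P⟩ by semigroup endomorphisms. -/

import Mathlib

/-- The defining relations of `⟨P⟩`: `p ∨ q = q ∨ p = q` whenever `p ≤ q`. -/
def chainRel (P : Type*) [PartialOrder P] : FreeSemigroup P → FreeSemigroup P → Prop :=
  fun x y => ∃ p q : P, p ≤ q ∧
    (x = FreeSemigroup.of p * FreeSemigroup.of q ∨
      x = FreeSemigroup.of q * FreeSemigroup.of p) ∧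
    y = FreeSemigroup.of q

private lemma map_pres (M P : Type*) [Monoid M] [PartialOrder P] [MulAction M P]
    (hmono : ∀ (a : M) (p q : P), p ≤ q → a • p ≤ a • q) (a : M) :
    ∀ x y, (conGen (chainRel P)) x y →
      (conGen (chainRel P)) (FreeSemigroup.map (a • ·) x) (FreeSemigroup.map (a • ·) y) := by
  intro x y h
  induction h with
  | of x y h =>
    obtain ⟨p, q, hpq, hx, hy⟩ := h
    apply ConGen.Rel.of
    refine ⟨a • p, a • q, hmono a p q hpq, ?_, ?_⟩
    · rcases hx with hx | hx <;> subst hx <;> simp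
    · subst hy; simp
  | refl => exact ConGen.Rel.refl _
  | symm _ ih => exact ConGen.Rel.symm ih
  | trans _ _ ih1 ih2 => exact ConGen.Rel.trans ih1 ih2
  | mul _ _ ih1 ih2 => simp only [map_mul]; exact ConGen.Rel.mul ih1 ih2

private lemma map_id' {P : Type*} (x : FreeSemigroup P) :
    FreeSemigroup.map (fun p => p) x = x := by
  induction x using FreeSemigroup.recOnMul with
  | ih1 p => simp
  | ih2 x y ihx ihy => simp [ihx, ihy]

private lemma map_comp' {P : Type*} (f g : P → P) (x : FreeSemigroup P) :
    FreeSemigroup.map (fun p => g (f p)) x =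
      FreeSemigroup.map g (FreeSemigroup.map f x) := by
  induction x using FreeSemigroup.recOnMul with
  | ih1 p => simp
  | ih2 x y ihx ihy => simp [ihx, ihy]

theorem stmt_12 (M P : Type*) [Monoid M] [PartialOrder P] [MulAction M P]
    (hmono : ∀ (a : M) (p q : P), p ≤ q → a • p ≤ a • q) :
    ∃ φ : M → (conGen (chainRel P)).Quotient → (conGen (chainRel P)).Quotient,
      (∀ (a : M) (p : P),
        φ a ((FreeSemigroup.of p : FreeSemigroup P) : (conGen (chainRel P)).Quotient) =
          ((FreeSemigroup.of (a • p) : FreeSemigroup P) : (conGen (chainRel P)).Quotient)) ∧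
      (∀ (a : M) (x y : (conGen (chainRel P)).Quotient), φ a (x * y) = φ a x * φ a y) ∧
      (∀ x, φ 1 x = x) ∧
      (∀ (a b : M) (x), φ (a * b) x = φ a (φ b x)) := by
  refine ⟨fun a => Quotient.map' (FreeSemigroup.map (a • ·)) (map_pres M P hmono a), ?_, ?_, ?_, ?_⟩
  · intro a p
    change Quotient.map' _ _ (Quotient.mk'' _) = Quotient.mk'' _
    rw [Quotient.map'_mk'']
    simp
  · intro a x y
    induction x using Quotient.inductionOn' with
    | h x =>
    induction y using Quotient.inductionOn' with
    | h y =>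
    show Quotient.map' _ _ (Quotient.mk'' (x * y)) = _
    rw [Quotient.map'_mk'']
    simp only [map_mul]
    rfl
  · intro x
    induction x using Quotient.inductionOn' with
    | h x =>
    show Quotient.map' _ _ (Quotient.mk'' x) = _
    rw [Quotient.map'_mk'']
    simp only [one_smul, map_id']
  · intro a b x
    induction x using Quotient.inductionOn' with
    | h x =>
    show Quotient.map' _ _ (Quotient.mk'' x) = Quotient.map' _ _ (Quotient.map' _ _ (Quotient.mk'' x))
    rw [Quotient.map'_mk'', Quotient.map'_mk'', Quotient.map'_mk'']
    congr 1
    simp only [mul_smul]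
    exact map_comp' _ _ x
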